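/- Let α = 2(N+1) with N ∈ ℕ, and define u_k = c_{2k+1+α} where the odd coefficients satisfy c_k = ((k² − α²)/(k(k−1))) c_{k−2}, with u₀ ≠ 0. Then u_k/u_{k−1} = 1 + 1/(2k) + O(1/k²) as k → ∞, and consequently u_n ∼ C√n for some constant C ≠ 0; in particular Σ u_n diverges, so the odd power series Q(X) = Σ_p c_{2p+1} X^{2p} has radius of convergence 1 and Σ_p c_{2p+1} diverges. -/

import Mathlib

open Filter


lemma log_approx (x : ℝ) (hx : 0 < x) : |Real.log x - (x - 1)| ≤ (x - 1) ^ 2 / x := by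
  have h1 : Real.log x ≤ x - 1 := Real.log_le_sub_one_of_pos hx
  have h2 : 1 - x⁻¹ ≤ Real.log x := Real.one_sub_inv_le_log_of_pos hx
  have key : 1 - x⁻¹ - (x - 1) = -((x-1)^2/x) := by field_simp; ring
  have hpos : 0 ≤ (x-1)^2/x := by positivity
  rw [abs_le]
  exact ⟨by linarith [key], by linarith [hpos]⟩

lemma ratio_bound (a x : ℝ) (ha2 : 2 ≤ a) (hx1 : 1 ≤ x) :
    |((2*x+1+a)^2 - a^2)/((2*x+1+a)*(2*x+a)) - 1 - 1/(2*x)| ≤ a*(a+1)/x^2 := by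
  have hx0 : (0:ℝ) < x := by linarith
  have hd1 : (0:ℝ) < 2*x+1+a := by linarith
  have hd2 : (0:ℝ) < 2*x+a := by linarith
  have hid : ((2*x+1+a)^2 - a^2)/((2*x+1+a)*(2*x+a)) - 1 - 1/(2*x) =
      -((a*(a+1)*(2*x+1)) / ((2*x) * ((2*x+a) * (2*x+1+a)))) := by
    field_simp
    ring
  have hnum : (0:ℝ) < a*(a+1)*(2*x+1) :=
    mul_pos (mul_pos (by linarith) (by linarith)) (by linarith)
  rw [hid, abs_neg, abs_div, abs_of_pos hnum, abs_of_pos (by positivity)]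
  rw [div_le_div_iff₀ (by positivity) (by positivity)]
  have h3 : x^2*(2*x+1) ≤ 2*x*((2*x+a)*(2*x+1+a)) := by
    nlinarith [mul_pos hx0 hx0, mul_pos (mul_pos hx0 hx0) hx0]
  have h4 : (0:ℝ) ≤ a*(a+1) := by nlinarith
  nlinarith [mul_le_mul_of_nonneg_left h3 h4]

lemma g_bound (a x : ℝ) (ha2 : 2 ≤ a) (hx2 : 2 ≤ x) :
    |Real.log (((2*x+1+a)^2 - a^2)/((2*x+1+a)*(2*x+a)))
        + (Real.log (x-1) - Real.log x)/2|
      ≤ ((1+a)*((a^2+a+3)/4)^2 + a*(a+1) + 2) / x^2 := by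
  have hx1 : (1:ℝ) ≤ x := by linarith
  have hx0 : (0:ℝ) < x := by linarith
  have hd1 : (0:ℝ) < 2*x+1+a := by linarith
  have hd2 : (0:ℝ) < 2*x+a := by linarith
  have habs := ratio_bound a x ha2 hx1
  set R : ℝ := ((2*x+1+a)^2 - a^2)/((2*x+1+a)*(2*x+a)) with hR
  have hRpos : 0 < R := by
    rw [hR]
    apply div_pos
    · nlinarith
    · positivity
  have hrlo : 1/(a+1) ≤ R := by
    rw [hR, div_le_div_iff₀ (by linarith) (by positivity)]
    have h1 : (2*x+1+a) ≤ (2*x+1)*(a+1) := by nlinarith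
    have h2 : (2*x+a) ≤ 2*x+1+2*a := by linarith
    have h3 : (2*x+1+a)*(2*x+a) ≤ ((2*x+1)*(a+1))*(2*x+1+2*a) :=
      mul_le_mul h1 h2 (by linarith) (by positivity)
    nlinarith [h3]
  have hr1 : |R - 1| ≤ (a^2+a+3)/(4*x) := by
    have hid : R - 1 = (2*x + (1 + a - a^2)) / ((2*x+1+a)*(2*x+a)) := by
      rw [hR]; field_simp; ring
    rw [hid, abs_div, abs_of_pos (mul_pos hd1 hd2)]
    rw [div_le_div_iff₀ (mul_pos hd1 hd2) (by positivity)]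
    have hnumle : |2*x + (1 + a - a^2)| ≤ 2*x + 1 + a + a^2 := by
      rw [abs_le]; constructor <;> nlinarith
    have h4 : 4*x^2 ≤ (2*x+1+a)*(2*x+a) := by nlinarith
    have h5 : 2*x+1+a+a^2 ≤ (a^2+a+3)*x := by nlinarith
    calc |2*x + (1 + a - a^2)| * (4*x) ≤ ((a^2+a+3)*x) * (4*x) := by
          have := mul_le_mul (hnumle.trans h5) (le_refl (4*x)) (by linarith) (by nlinarith)
          linarith [this]
      _ = (a^2+a+3) * (4*x^2) := by ring
      _ ≤ (a^2+a+3) * ((2*x+1+a)*(2*x+a)) := by nlinarith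
  clear_value R
  have hrinv : R⁻¹ ≤ a+1 := by
    rw [inv_le_comm₀ hRpos (by linarith)]
    rwa [inv_eq_one_div]
  have e1 : |Real.log R - (R - 1)| ≤ (1+a)*((a^2+a+3)/4)^2 / x^2 := by
    refine le_trans (log_approx R hRpos) ?_
    have h1 : (R - 1)^2 ≤ ((a^2+a+3)/(4*x))^2 :=
      sq_le_sq' (by linarith [(abs_le.mp hr1).1]) (abs_le.mp hr1).2
    rw [div_eq_mul_inv]
    calc (R - 1)^2 * R⁻¹ ≤ ((a^2+a+3)/(4*x))^2 * (a+1) :=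
          mul_le_mul h1 hrinv (inv_nonneg.mpr hRpos.le) (by positivity)
      _ = (1+a)*((a^2+a+3)/4)^2 / x^2 := by field_simp; ring
  have e2 : |Real.log R - 1/(2*x)| ≤ ((1+a)*((a^2+a+3)/4)^2 + a*(a+1)) / x^2 := by
    calc |Real.log R - 1/(2*x)|
        = |(Real.log R - (R - 1)) + (R - 1 - 1/(2*x))| := by
          rw [show Real.log R - 1/(2*x) = (Real.log R - (R - 1)) + (R - 1 - 1/(2*x)) from by ring]
      _ ≤ |Real.log R - (R - 1)| + |R - 1 - 1/(2*x)| := abs_add_le _ _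
      _ ≤ (1+a)*((a^2+a+3)/4)^2 / x^2 + a*(a+1)/x^2 := add_le_add e1 habs
      _ = ((1+a)*((a^2+a+3)/4)^2 + a*(a+1)) / x^2 := by ring
  have e3 : |(Real.log (x-1) - Real.log x)/2 + 1/(2*x)| ≤ 2 / x^2 := by
    have hxm1 : (0:ℝ) < x - 1 := by linarith
    have hy0 : 0 < x/(x-1) := by positivity
    have hylog : Real.log (x/(x-1)) = Real.log x - Real.log (x-1) :=
      Real.log_div (by linarith) (by linarith)
    have hy1 : x/(x-1) - 1 = 1/(x-1) := by field_simp; ring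
    have l1 : |Real.log (x/(x-1)) - (x/(x-1)-1)| ≤ (x/(x-1)-1)^2/(x/(x-1)) :=
      log_approx _ hy0
    have l1' : (x/(x-1)-1)^2/(x/(x-1)) = 1/((x-1)*x) := by
      rw [hy1]; field_simp
    have l2 : |(x/(x-1)-1) - 1/x| ≤ 1/((x-1)*x) := by
      have h6 : (x/(x-1)-1) - 1/x = 1/((x-1)*x) := by
        rw [hy1]; field_simp; ring
      rw [h6, abs_of_pos (by positivity)]
    have l3 : 1/((x-1)*x) ≤ 2/x^2 := by
      rw [div_le_div_iff₀ (by positivity) (by positivity)]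
      nlinarith
    have l4 : |Real.log (x/(x-1)) - 1/x| ≤ 4/x^2 := by
      calc |Real.log (x/(x-1)) - 1/x|
          = |(Real.log (x/(x-1)) - (x/(x-1)-1)) + ((x/(x-1)-1) - 1/x)| := by
            rw [show Real.log (x/(x-1)) - 1/x
              = (Real.log (x/(x-1)) - (x/(x-1)-1)) + ((x/(x-1)-1) - 1/x) from by ring]
        _ ≤ |Real.log (x/(x-1)) - (x/(x-1)-1)| + |(x/(x-1)-1) - 1/x| := abs_add_le _ _
        _ ≤ 1/((x-1)*x) + 1/((x-1)*x) := add_le_add (le_trans l1 (le_of_eq l1')) l2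
        _ ≤ 2/x^2 + 2/x^2 := add_le_add l3 l3
        _ = 4/x^2 := by ring
    calc |(Real.log (x-1) - Real.log x)/2 + 1/(2*x)|
        = |Real.log (x/(x-1)) - 1/x|/2 := by
          have h7 : (Real.log (x-1) - Real.log x)/2 + 1/(2*x)
              = (-(Real.log (x/(x-1)) - 1/x))/2 := by rw [hylog]; ring
          rw [h7, abs_div, abs_neg, abs_two]
      _ ≤ (4/x^2)/2 := by linarith [l4]
      _ = 2/x^2 := by ring
  calc |Real.log R + (Real.log (x-1) - Real.log x)/2|
      = |(Real.log R - 1/(2*x)) + ((Real.log (x-1) - Real.log x)/2 + 1/(2*x))| := by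
        rw [show Real.log R + (Real.log (x-1) - Real.log x)/2
          = (Real.log R - 1/(2*x)) + ((Real.log (x-1) - Real.log x)/2 + 1/(2*x)) from by ring]
    _ ≤ |Real.log R - 1/(2*x)| + |(Real.log (x-1) - Real.log x)/2 + 1/(2*x)| := abs_add_le _ _
    _ ≤ ((1+a)*((a^2+a+3)/4)^2 + a*(a+1)) / x^2 + 2/x^2 := add_le_add e2 e3
    _ = ((1+a)*((a^2+a+3)/4)^2 + a*(a+1) + 2) / x^2 := by ring

/-- with `α = 2(N+1)` and the odd coefficients satisfying
`c_k = ((k² − α²)/(k(k−1))) c_{k−2}`, set `u_k = c_{2k+1+α}` with `u₀ ≠ 0`.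
Then `u_k/u_{k−1} = 1 + 1/(2k) + O(1/k²)`, `u_n ∼ C √n` for some `C ≠ 0`,
the series `Σ u_n` diverges, and consequently the odd power series
`Q(X) = Σ_p c_{2p+1} X^{2p}` has radius of convergence `1` and `Σ_p c_{2p+1}`
diverges. -/
theorem odd_series_asymptotics (N : ℕ) (α : ℕ) (hα : α = 2 * (N + 1))
    (c : ℕ → ℝ)
    (hrec : ∀ k : ℕ, 2 ≤ k →
      c k = (((k : ℝ) ^ 2 - (α : ℝ) ^ 2) / ((k : ℝ) * ((k : ℝ) - 1)))
              * c (k - 2))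
    (u : ℕ → ℝ) (hu : ∀ k : ℕ, u k = c (2 * k + 1 + α))
    (hu0 : u 0 ≠ 0) :
    (∃ C₂ : ℝ, 0 < C₂ ∧ ∀ k : ℕ, 1 ≤ k →
      |u k / u (k - 1) - 1 - 1 / (2 * (k : ℝ))| ≤ C₂ / (k : ℝ) ^ 2) ∧
    (∃ C : ℝ, C ≠ 0 ∧
      Tendsto (fun n : ℕ => u n / Real.sqrt n) atTop (nhds C)) ∧
    ¬ Summable u ∧
    (∀ X : ℝ, |X| < 1 → Summable (fun p : ℕ => c (2 * p + 1) * X ^ (2 * p))) ∧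
    ¬ Summable (fun p : ℕ => c (2 * p + 1)) := by
  have ha2 : (2 : ℝ) ≤ (α:ℝ) := by rw [hα]; push_cast; linarith
  set a : ℝ := (α : ℝ) with ha
  set r : ℕ → ℝ := fun k =>
    ((2*(k:ℝ)+1+a)^2 - a^2) / ((2*(k:ℝ)+1+a) * (2*(k:ℝ)+a)) with hr
  have hstep : ∀ k : ℕ, 1 ≤ k → u k = r k * u (k-1) := by
    intro k hk
    have h2 : 2 ≤ 2*k+1+α := by omega
    have hc := hrec (2*k+1+α) h2
    have harg : 2*k+1+α - 2 = 2*(k-1)+1+α := by omega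
    rw [harg] at hc
    rw [hu k, hu (k-1), hc]
    congr 1
    rw [hr]
    push_cast
    rw [← ha]
    ring_nf
  have hrpos : ∀ k : ℕ, 0 < r k := by
    intro k
    have hk0 : (0:ℝ) ≤ (k:ℝ) := Nat.cast_nonneg k
    apply div_pos
    · nlinarith
    · nlinarith
  have hne : ∀ k : ℕ, u k ≠ 0 := by
    intro k
    induction k with
    | zero => exact hu0
    | succ n ih =>
      rw [hstep (n+1) (by omega)]
      simp only [Nat.add_sub_cancel]
      exact mul_ne_zero (hrpos (n+1)).ne' ih
  have hsgn : ∀ k : ℕ, 0 < u k * u 0 := by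
    intro k
    induction k with
    | zero => exact mul_self_pos.mpr hu0
    | succ n ih =>
      rw [hstep (n+1) (by omega)]
      simp only [Nat.add_sub_cancel]
      rw [mul_assoc]
      exact mul_pos (hrpos (n+1)) ih
  have hratio : ∀ k : ℕ, 1 ≤ k → u k / u (k-1) = r k := by
    intro k hk
    rw [hstep k hk, mul_div_assoc, div_self (hne (k-1)), mul_one]
  have habs : ∀ k : ℕ, 1 ≤ k → |r k - 1 - 1/(2*(k:ℝ))| ≤ (a*(a+1)) / (k:ℝ)^2 := by
    intro k hk
    have hx1 : (1:ℝ) ≤ (k:ℝ) := by exact_mod_cast hk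
    have := ratio_bound a (k:ℝ) ha2 hx1
    rw [hr]
    exact this
  refine ⟨⟨a*(a+1), by nlinarith, fun k hk => by
      rw [hratio k hk]; exact habs k hk⟩, ?_⟩
  -- the limit
  set K : ℝ := (1+a)*((a^2+a+3)/4)^2 + a*(a+1) + 2 with hK
  have hK0 : 0 < K := by positivity
  set g : ℕ → ℝ := fun j =>
    if j < 2 then 0 else Real.log (r j) + (Real.log ((j:ℝ)-1) - Real.log (j:ℝ))/2
    with hg
  have hgb : ∀ j : ℕ, |g j| ≤ K / (j:ℝ)^2 := by
    intro j
    by_cases hj : j < 2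
    · have : g j = 0 := by rw [hg]; simp [hj]
      rw [this, abs_zero]
      positivity
    · push_neg at hj
      have hx2 : (2:ℝ) ≤ (j:ℝ) := by exact_mod_cast hj
      have : g j = Real.log (r j) + (Real.log ((j:ℝ)-1) - Real.log (j:ℝ))/2 := by
        rw [hg]; simp [Nat.not_lt.mpr hj]
      rw [this, hr]
      exact g_bound a (j:ℝ) ha2 hx2
  have hgsum : Summable g := by
    apply summable_abs_iff.mp
    apply Summable.of_nonneg_of_le (fun j => abs_nonneg _) hgb
    have h1 : Summable (fun j : ℕ => 1/(j:ℝ)^2) :=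
      Real.summable_one_div_nat_pow.mpr (by norm_num)
    exact (h1.mul_left K).congr (fun j => by ring)
  set f : ℕ → ℝ := fun n => Real.log |u n| - Real.log (n:ℝ)/2 with hf
  have hfstep : ∀ n : ℕ, 1 ≤ n → f (n+1) = f n + g (n+1) := by
    intro n hn
    have hu1 : u (n+1) = r (n+1) * u n := by
      have := hstep (n+1) (by omega)
      simpa using this
    have habs1 : |u (n+1)| = r (n+1) * |u n| := by
      rw [hu1, abs_mul, abs_of_pos (hrpos (n+1))]
    have hlog : Real.log |u (n+1)| = Real.log (r (n+1)) + Real.log |u n| := by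
      rw [habs1, Real.log_mul (hrpos (n+1)).ne' (abs_ne_zero.mpr (hne n))]
    have hgval : g (n+1) = Real.log (r (n+1))
        + (Real.log ((n:ℝ)+1-1) - Real.log ((n:ℝ)+1))/2 := by
      rw [hg]
      have : ¬ (n+1 < 2) := by omega
      simp only [this, if_false]
      push_cast
      ring_nf
    rw [hf]
    simp only []
    rw [hlog, hgval]
    push_cast
    ring_nf
  have hfsum : ∀ n : ℕ, 1 ≤ n → f n = f 1 + ∑ j ∈ Finset.range (n+1), g j := by
    intro n hn
    induction n with
    | zero => omega
    | succ m ih =>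
      by_cases hm : 1 ≤ m
      · rw [hfstep m hm, ih hm, Finset.sum_range_succ g (m+1)]
        ring
      · have hm0 : m = 0 := by omega
        subst hm0
        have : ∑ j ∈ Finset.range 2, g j = 0 := by
          rw [Finset.sum_range_succ, Finset.sum_range_one]
          have g0 : g 0 = 0 := by rw [hg]; norm_num
          have g1 : g 1 = 0 := by rw [hg]; norm_num
          rw [g0, g1]; ring
        rw [this]; ring
  set S : ℝ := ∑' j, g j with hS
  have h1 : Tendsto (fun n => ∑ j ∈ Finset.range n, g j) atTop (nhds S) :=
    hgsum.hasSum.tendsto_sum_nat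
  have h2 : Tendsto (fun n => ∑ j ∈ Finset.range (n+1), g j) atTop (nhds S) :=
    h1.comp (tendsto_add_atTop_nat 1)
  have h3 : Tendsto f atTop (nhds (f 1 + S)) := by
    apply Tendsto.congr' _ (tendsto_const_nhds.add h2)
    filter_upwards [eventually_ge_atTop 1] with n hn
    exact (hfsum n hn).symm
  have h4 : Tendsto (fun n => Real.exp (f n)) atTop (nhds (Real.exp (f 1 + S))) :=
    (Real.continuous_exp.tendsto _).comp h3
  have h5 : ∀ n : ℕ, 1 ≤ n → Real.exp (f n) = |u n| / Real.sqrt n := by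
    intro n hn
    have hn0 : (0:ℝ) < (n:ℝ) := by exact_mod_cast hn
    have hsq : (0:ℝ) < Real.sqrt n := Real.sqrt_pos.mpr hn0
    have hab : (0:ℝ) < |u n| := abs_pos.mpr (hne n)
    rw [hf]
    simp only []
    rw [Real.exp_sub, Real.exp_log hab, ← Real.log_sqrt hn0.le,
      Real.exp_log hsq]
  have h6 : Tendsto (fun n : ℕ => |u n| / Real.sqrt n) atTop
      (nhds (Real.exp (f 1 + S))) := by
    apply h4.congr'
    filter_upwards [eventually_ge_atTop 1] with n hn
    exact h5 n hn
  set σ : ℝ := u 0 / |u 0| with hσ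
  have hσne : σ ≠ 0 := div_ne_zero hu0 (abs_ne_zero.mpr hu0)
  have husign : ∀ n : ℕ, u n = σ * |u n| := by
    intro n
    rcases lt_or_gt_of_ne hu0 with h | h
    · have hun : u n < 0 := by nlinarith [hsgn n]
      rw [hσ, abs_of_neg h, abs_of_neg hun]
      field_simp
    · have hun : 0 < u n := by nlinarith [hsgn n]
      rw [hσ, abs_of_pos h, abs_of_pos hun]
      field_simp
  set C : ℝ := σ * Real.exp (f 1 + S) with hC
  have hCne : C ≠ 0 := mul_ne_zero hσne (Real.exp_ne_zero _)
  have hCt : Tendsto (fun n : ℕ => u n / Real.sqrt n) atTop (nhds C) := by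
    have h7 := h6.const_mul σ
    exact h7.congr (fun n => by rw [← mul_div_assoc, ← husign n])
  refine ⟨⟨C, hCne, hCt⟩, ?_⟩
  have hnsum : ¬ Summable u := by
    intro hsum
    have h0 : Tendsto u atTop (nhds 0) := hsum.tendsto_atTop_zero
    have hz : Tendsto (fun n : ℕ => u n / Real.sqrt n) atTop (nhds 0) := by
      apply squeeze_zero_norm' _ (by simpa using h0.abs)
      · filter_upwards [eventually_ge_atTop 1] with n hn
        have hn1 : (1:ℝ) ≤ Real.sqrt n := by
          rw [show (1:ℝ) = Real.sqrt 1 from (Real.sqrt_one).symm]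
          exact Real.sqrt_le_sqrt (by exact_mod_cast hn)
        rw [Real.norm_eq_abs, abs_div, abs_of_nonneg (Real.sqrt_nonneg _)]
        exact div_le_self (abs_nonneg _) hn1
    exact hCne (tendsto_nhds_unique hCt hz)
  clear_value a r K g f S σ C
  refine ⟨hnsum, ?_, ?_⟩
  · -- radius of convergence
    intro X hX
    have hXsq : ‖X^2‖ < 1 := by
      rw [Real.norm_eq_abs, abs_pow]
      nlinarith [abs_nonneg X]
    have hmaj : Summable (fun p : ℕ => (|C|+1) * (((p:ℝ)+1) * (X^2)^p)) := by
      have hs1 : Summable (fun n : ℕ => (n:ℝ)^1 * (X^2)^n) :=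
        summable_pow_mul_geometric_of_norm_lt_one 1 hXsq
      have hs2 : Summable (fun n : ℕ => (X^2)^n) :=
        summable_geometric_of_norm_lt_one hXsq
      exact ((hs1.add hs2).congr (fun n => by push_cast; ring)).mul_left _
    -- eventual bound on |u k|
    have hev : ∀ᶠ k in atTop, |u k| ≤ (|C|+1) * ((k:ℝ)+1) := by
      have habsC : Tendsto (fun n : ℕ => |u n / Real.sqrt n|) atTop (nhds |C|) :=
        hCt.abs
      have hlt : ∀ᶠ n in atTop, |u n / Real.sqrt n| < |C|+1 :=
        habsC.eventually_lt_const (lt_add_one _)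
      filter_upwards [hlt, eventually_ge_atTop 1] with n hn hn1
      have hn0 : (0:ℝ) < (n:ℝ) := by exact_mod_cast hn1
      have hsq : (0:ℝ) < Real.sqrt n := Real.sqrt_pos.mpr hn0
      have hsqle : Real.sqrt n ≤ (n:ℝ)+1 := by
        rw [show (n:ℝ)+1 = Real.sqrt (((n:ℝ)+1)^2) from
          (Real.sqrt_sq (by positivity)).symm]
        exact Real.sqrt_le_sqrt (by nlinarith)
      have : |u n| = |u n / Real.sqrt n| * Real.sqrt n := by
        rw [abs_div, abs_of_nonneg (Real.sqrt_nonneg _)]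
        field_simp
      rw [this]
      exact mul_le_mul hn.le hsqle hsq.le (by positivity)
    rw [eventually_atTop] at hev
    obtain ⟨k₀, hk₀⟩ := hev
    apply Summable.of_norm_bounded_eventually_nat hmaj
    filter_upwards [eventually_ge_atTop (k₀ + N + 1)] with p hp
    have hpN : N+1 ≤ p := by omega
    have hcp : c (2*p+1) = u (p - (N+1)) := by
      rw [hu]; congr 1; omega
    have hineq : |u (p - (N+1))| ≤ (|C|+1) * ((p:ℝ)+1) := by
      have h1 : k₀ ≤ p - (N+1) := by omega
      refine (hk₀ _ h1).trans ?_
      have : ((p - (N+1) : ℕ) : ℝ) ≤ (p:ℝ) := by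
        exact_mod_cast Nat.sub_le p (N+1)
      nlinarith [abs_nonneg C]
    have hXp : |X ^ (2*p)| = (X^2)^p := by
      rw [pow_mul, abs_pow, abs_of_nonneg (sq_nonneg X)]
    rw [Real.norm_eq_abs, abs_mul, hcp, hXp]
    calc |u (p - (N+1))| * (X^2)^p ≤ ((|C|+1) * ((p:ℝ)+1)) * (X^2)^p := by
          apply mul_le_mul_of_nonneg_right hineq (by positivity)
      _ = (|C|+1) * (((p:ℝ)+1) * (X^2)^p) := by ring
  · -- divergence of Σ c(2p+1)
    intro hsum
    apply hnsum
    have h1 : Summable (fun p : ℕ => c (2*(p + (N+1))+1)) :=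
      (summable_nat_add_iff (f := fun p : ℕ => c (2*p+1)) (N+1)).mpr hsum
    apply h1.congr
    intro p
    rw [hu]
    congr 1
    omega
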